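/- Let V_{SP} be a regular vector space on S ⊎ P and let x_P ∈ V_{SP} ∘ P. Then there exists x_S with (x_S, x_P) ∈ V_{SP} and ||x_S|| ≤ sqrt(|S| · |P|) · ||x_P||. -/

import Mathlib

/-- A matrix is totally unimodular iff every square submatrix has determinant 0, 1 or -1. -/
def TU {R X : Type*} (A : Matrix R X ℚ) : Prop :=
  ∀ (k : ℕ) (f : Fin k → R) (g : Fin k → X),
    (A.submatrix f g).det = 0 ∨ (A.submatrix f g).det = 1 ∨ (A.submatrix f g).det = -1

/-- A regular vector space: one having a totally unimodular representative matrix. -/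
def IsRegularSpace {X : Type*} (V : Set (X → ℚ)) : Prop :=
  ∃ (m : ℕ) (A : Matrix (Fin m) X ℚ), TU A ∧ LinearIndependent ℚ (fun i => A i) ∧
    (Submodule.span ℚ (Set.range fun i => A i) : Set (X → ℚ)) = V

open Submodule in
/-- From any finite family one can select an independent subfamily spanning the same span. -/
lemma enum_aux {K V n : Type*} [Field K] [AddCommGroup V] [Module K V] [Fintype n]
    (f : n → V) : ∃ (r : ℕ) (ι : Fin r → n),
      LinearIndependent K (fun j => f (ι j)) ∧
      ∀ i, f i ∈ Submodule.span K (Set.range fun j => f (ι j)) := by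
  classical
  obtain ⟨s, hsub, hsp, hli⟩ := exists_linearIndependent K (Set.range f)
  have hfin : s.Finite := (Set.finite_range f).subset hsub
  have : Fintype ↥s := hfin.fintype
  let e := (Fintype.equivFin ↥s).symm
  have hch : ∀ j : Fin (Fintype.card ↥s), f (Classical.choose (hsub (e j).2)) = ↑(e j) :=
    fun j => Classical.choose_spec (hsub (e j).2)
  refine ⟨_, fun j => Classical.choose (hsub (e j).2), ?_, ?_⟩
  · have h : (fun j => f (Classical.choose (hsub (e j).2))) = fun j => ((e j : V)) :=
      funext hch
    rw [h]
    exact hli.comp e e.injective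
  · intro i
    have h1 : f i ∈ span K (Set.range f) := subset_span ⟨i, rfl⟩
    rw [← hsp] at h1
    have h2 : s ⊆ Set.range fun j => f (Classical.choose (hsub (e j).2)) := by
      intro v hv
      exact ⟨e.symm ⟨v, hv⟩, (hch _).trans (by simp)⟩
    exact span_mono h2 h1

open Matrix Submodule Module in
/-- For an independent family of row vectors one can select columns making an invertible
square matrix. -/
lemma colsel {r : ℕ} {P : Type*} [Fintype P] (g : Fin r → P → ℚ)
    (hg : LinearIndependent ℚ g) :
    ∃ κ : Fin r → P, (Matrix.of fun j k => g j (κ k)).det ≠ 0 := by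
  classical
  set M : Matrix (Fin r) P ℚ := Matrix.of g with hM
  have hrank : M.rank = r := by
    have := hg.rank_matrix (M := M)
    simpa using this
  obtain ⟨r', κ', hli, hsp⟩ := enum_aux (K := ℚ) (fun p => Mᵀ p)
  have hspanEq : Submodule.span ℚ (Set.range fun j => Mᵀ (κ' j))
      = Submodule.span ℚ (Set.range Mᵀ) := by
    apply le_antisymm
    · exact span_mono (by rintro _ ⟨j, rfl⟩; exact ⟨κ' j, rfl⟩)
    · rw [span_le]; rintro _ ⟨p, rfl⟩; exact hsp p
  have hr' : r = r' := by
    have h1 : finrank ℚ (span ℚ (Set.range fun j => Mᵀ (κ' j))) = r' := by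
      rw [finrank_span_eq_card hli, Fintype.card_fin]
    rw [hspanEq] at h1
    rw [← hrank, Matrix.rank_eq_finrank_span_cols]
    exact h1
  refine ⟨fun k => κ' (Fin.cast hr' k), ?_⟩
  have hcols : LinearIndependent ℚ
      (fun k : Fin r => (Matrix.of fun j k => g j (κ' (Fin.cast hr' k)))ᵀ k) := by
    have : (fun k : Fin r => (Matrix.of fun j k => g j (κ' (Fin.cast hr' k)))ᵀ k)
        = (fun j => Mᵀ (κ' j)) ∘ (Fin.cast hr') := rfl
    rw [this]
    exact hli.comp _ (Fin.cast_injective hr')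
  have := Matrix.linearIndependent_cols_iff_isUnit.mp hcols
  have hu := this.map (f := Matrix.detMonoidHom)
  simpa using hu.ne_zero

open Matrix Submodule

theorem stmt18 {S P : Type*} [Fintype S] [Fintype P]
    (V : Set (S ⊕ P → ℚ)) (hV : IsRegularSpace V)
    (xP : P → ℚ)
    -- x_P ∈ V ∘ P
    (hx : ∃ fS, Sum.elim fS xP ∈ V) :
    ∃ xS : S → ℚ, Sum.elim xS xP ∈ V ∧
      Real.sqrt (∑ s, ((xS s : ℝ)) ^ 2) ≤
        Real.sqrt ((Fintype.card S : ℝ) * (Fintype.card P : ℝ)) *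
          Real.sqrt (∑ p, ((xP p : ℝ)) ^ 2) := by
  classical
  obtain ⟨m, A, hTU, hLI, hspan⟩ := hV
  obtain ⟨fS, hf⟩ := hx
  rw [← hspan] at hf
  obtain ⟨c, hc⟩ := (mem_span_range_iff_exists_fun ℚ).mp hf
  set AP : Fin m → P → ℚ := fun i p => A i (Sum.inr p) with hAP
  obtain ⟨r, ι, hind, hsp⟩ := enum_aux (K := ℚ) AP
  obtain ⟨κ, hκ⟩ := colsel (fun j => AP (ι j)) hind
  set N : Matrix (Fin r) (Fin r) ℚ := A.submatrix ι (fun k => Sum.inr (κ k)) with hN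
  have hNdet : N.det ≠ 0 := hκ
  -- xP lies in the span of the selected rows (restricted to P)
  have hxPmem : xP ∈ span ℚ (Set.range fun j => AP (ι j)) := by
    have h1 : xP = ∑ i, c i • AP i := by
      funext p
      have := congrFun hc (Sum.inr p)
      simpa [hAP] using this.symm
    rw [h1]
    exact Submodule.sum_mem _ fun i _ => Submodule.smul_mem _ _ (hsp i)
  obtain ⟨d, hd⟩ := (mem_span_range_iff_exists_fun ℚ).mp hxPmem
  refine ⟨fun s => ∑ j, d j * A (ι j) (Sum.inl s), ?_, ?_⟩
  · -- membership
    rw [← hspan]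
    have : Sum.elim (fun s => ∑ j, d j * A (ι j) (Sum.inl s)) xP = ∑ j, d j • A (ι j) := by
      funext z
      cases z with
      | inl s => simp
      | inr p =>
        have := congrFun hd p
        simpa [hAP] using this.symm
    rw [this]
    exact Submodule.sum_mem _ fun j _ =>
      Submodule.smul_mem _ _ (Submodule.subset_span ⟨ι j, rfl⟩)
  · -- norm bound
    have hdet1 : |N.det| = 1 := by
      rcases hTU r ι (fun k => Sum.inr (κ k)) with h | h | h
      · exact absurd h hNdet
      · rw [show N.det = 1 from h]; norm_num
      · rw [show N.det = -1 from h]; norm_num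
    have hinj : Function.Injective κ := by
      intro a b hab
      by_contra hne
      exact hNdet (det_zero_of_column_eq hne fun j => by simp [hN, hab])
    have key : ∀ s : S, |∑ j, d j * A (ι j) (Sum.inl s)| ≤ ∑ p, |xP p| := by
      intro s
      set u : Fin r → ℚ := fun j => A (ι j) (Sum.inl s) with hu
      set w : Fin r → ℚ := (N.det)⁻¹ • N.cramer u with hw
      have hNw : N *ᵥ w = u := by
        rw [hw, cramer_eq_adjugate_mulVec, mulVec_smul, mulVec_mulVec, mul_adjugate,
          smul_mulVec, one_mulVec, smul_smul, inv_mul_cancel₀ hNdet, one_smul]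
      have hvm : N.vecMul d = fun k => xP (κ k) := by
        funext k
        have := congrFun hd (κ k)
        simpa [Matrix.vecMul, dotProduct, hN, hAP] using this
      have hform : ∑ j, d j * A (ι j) (Sum.inl s) = ∑ k, xP (κ k) * w k := by
        have : ∑ j, d j * A (ι j) (Sum.inl s) = d ⬝ᵥ u := rfl
        rw [this, ← hNw, dotProduct_mulVec, hvm]
        rfl
      have hwk : ∀ k, |w k| ≤ 1 := by
        intro k
        have h1 : w k = (N.det)⁻¹ * (N.updateCol k u).det := by
          rw [hw, Pi.smul_apply, smul_eq_mul, cramer_apply]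
        have h2 : N.updateCol k u
            = A.submatrix ι (Function.update (fun k' => Sum.inr (κ k')) k (Sum.inl s)) := by
          funext j k'
          by_cases hkk : k' = k
          · subst hkk; simp [hN, hu]
          · simp [hN, Matrix.updateCol_apply, Function.update_apply, hkk]
        have h3 : |(N.updateCol k u).det| ≤ 1 := by
          rw [h2]
          rcases hTU r ι (Function.update (fun k' => Sum.inr (κ k')) k (Sum.inl s))
            with h | h | h <;> rw [h] <;> norm_num
        rw [h1, abs_mul, abs_inv, hdet1]
        simpa using h3
      calc |∑ j, d j * A (ι j) (Sum.inl s)| = |∑ k, xP (κ k) * w k| := by rw [hform]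
        _ ≤ ∑ k, |xP (κ k) * w k| := Finset.abs_sum_le_sum_abs _ _
        _ ≤ ∑ k, |xP (κ k)| := by
            refine Finset.sum_le_sum fun k _ => ?_
            rw [abs_mul]
            calc |xP (κ k)| * |w k| ≤ |xP (κ k)| * 1 :=
                  mul_le_mul_of_nonneg_left (hwk k) (abs_nonneg _)
              _ = |xP (κ k)| := mul_one _
        _ = ∑ p ∈ Finset.univ.image κ, |xP p| := by
            rw [Finset.sum_image (fun a _ b _ h => hinj h)]
        _ ≤ ∑ p, |xP p| :=
            Finset.sum_le_sum_of_subset_of_nonneg (Finset.subset_univ _)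
              (fun _ _ _ => abs_nonneg _)
    -- pass to the reals
    set xS : S → ℚ := fun s => ∑ j, d j * A (ι j) (Sum.inl s) with hxS
    have hCS : (∑ p, |(xP p : ℝ)|) ^ 2 ≤ (Fintype.card P : ℝ) * ∑ p, ((xP p : ℝ)) ^ 2 := by
      have := Finset.sum_mul_sq_le_sq_mul_sq Finset.univ (fun _ : P => (1 : ℝ))
        (fun p => |(xP p : ℝ)|)
      simpa [sq_abs, Finset.card_univ] using this
    have hsq : ∀ s : S, ((xS s : ℝ)) ^ 2 ≤ (Fintype.card P : ℝ) * ∑ p, ((xP p : ℝ)) ^ 2 := by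
      intro s
      have h1 : |(xS s : ℝ)| ≤ ∑ p, |(xP p : ℝ)| := by
        have this2 : |xS s| ≤ ∑ p, |xP p| := key s
        calc |(xS s : ℝ)| = ((|xS s| : ℚ) : ℝ) := (Rat.cast_abs _).symm
          _ ≤ ((∑ p, |xP p| : ℚ) : ℝ) := by exact_mod_cast this2
          _ = ∑ p, |(xP p : ℝ)| := by push_cast [Rat.cast_abs]; rfl
      calc ((xS s : ℝ)) ^ 2 = |(xS s : ℝ)| ^ 2 := (sq_abs _).symm
        _ ≤ (∑ p, |(xP p : ℝ)|) ^ 2 :=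
            pow_le_pow_left₀ (abs_nonneg _) h1 2
        _ ≤ (Fintype.card P : ℝ) * ∑ p, ((xP p : ℝ)) ^ 2 := hCS
    have hsum : ∑ s, ((xS s : ℝ)) ^ 2 ≤
        (Fintype.card S : ℝ) * (Fintype.card P : ℝ) * ∑ p, ((xP p : ℝ)) ^ 2 := by
      calc ∑ s, ((xS s : ℝ)) ^ 2
          ≤ ∑ _s : S, (Fintype.card P : ℝ) * ∑ p, ((xP p : ℝ)) ^ 2 :=
            Finset.sum_le_sum fun s _ => hsq s
        _ = (Fintype.card S : ℝ) * ((Fintype.card P : ℝ) * ∑ p, ((xP p : ℝ)) ^ 2) := by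
            rw [Finset.sum_const, Finset.card_univ, nsmul_eq_mul]
        _ = (Fintype.card S : ℝ) * (Fintype.card P : ℝ) * ∑ p, ((xP p : ℝ)) ^ 2 := by ring
    calc Real.sqrt (∑ s, ((xS s : ℝ)) ^ 2)
        ≤ Real.sqrt ((Fintype.card S : ℝ) * (Fintype.card P : ℝ) * ∑ p, ((xP p : ℝ)) ^ 2) :=
          Real.sqrt_le_sqrt hsum
      _ = Real.sqrt ((Fintype.card S : ℝ) * (Fintype.card P : ℝ)) *
          Real.sqrt (∑ p, ((xP p : ℝ)) ^ 2) := Real.sqrt_mul (by positivity) _
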